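/- arXiv:0804.0565 — 3 statements merged into one kernel-verified Lean document; each statement's English description precedes it below -/
import Mathlib

section
/- Let E, F be locally convex spaces, U ⊆ E open and convex with 0 ∈ U, and f : U → F uniformly continuous. Then f is Lipschitz on large distances: for every continuous seminorm r on E and every continuous seminorm q on F there exists a continuous seminorm p on E such that for all x₁, x₂ ∈ U with r(x₁ - x₂) ≥ 1, one has q(f(x₁) - f(x₂)) ≤ p(x₁ - x₂). -/
open Filter Set Uniformity Topology

lemma seminorm_sum_le_aux {F : Type*} [AddCommGroup F] [Module ℝ F]
    (q : Seminorm ℝ F) (n : ℕ) (g : ℕ → F) :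
    q (∑ i ∈ Finset.range n, g i) ≤ ∑ i ∈ Finset.range n, q (g i) := by
  induction n with
  | zero => simp
  | succ n ih =>
    rw [Finset.sum_range_succ, Finset.sum_range_succ]
    exact le_trans (map_add_le_add q _ _) (by linarith)

/-- A uniformly continuous map on an open convex `0`-neighborhood of a locally convex
space is Lipschitz on large distances. -/
theorem uniformContinuous_lipschitz_on_large_distances
    {E F : Type*}
    [AddCommGroup E] [Module ℝ E] [UniformSpace E] [IsUniformAddGroup E]
    [ContinuousSMul ℝ E] [LocallyConvexSpace ℝ E]
    [AddCommGroup F] [Module ℝ F] [UniformSpace F] [IsUniformAddGroup F]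
    [ContinuousSMul ℝ F] [LocallyConvexSpace ℝ F]
    (U : Set E) (hUopen : IsOpen U) (hUconv : Convex ℝ U) (hU0 : (0 : E) ∈ U)
    (f : E → F) (hf : UniformContinuousOn f U) :
    ∀ r : Seminorm ℝ E, Continuous r → ∀ q : Seminorm ℝ F, Continuous q →
      ∃ p : Seminorm ℝ E, Continuous p ∧
        ∀ x₁ ∈ U, ∀ x₂ ∈ U, 1 ≤ r (x₁ - x₂) → q (f x₁ - f x₂) ≤ p (x₁ - x₂) := by
  intro r hr q hq
  -- an entourage in F from q
  have hV : {y : F × F | q (y.2 - y.1) < 1} ∈ 𝓤 F := by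
    rw [uniformity_eq_comap_nhds_zero F]
    show (fun y : F × F => y.2 - y.1) ⁻¹' {z : F | q z < 1} ∈ _
    refine Filter.preimage_mem_comap ?_
    have : IsOpen {y : F | q y < 1} := isOpen_Iio.preimage hq
    exact this.mem_nhds (by simp [map_zero])
  have hW : {x : E × E | x ∈ U ×ˢ U → q (f x.2 - f x.1) < 1} ∈ 𝓤 E := by
    have h := hf hV
    rw [Filter.mem_map, Filter.mem_inf_principal] at h
    exact h
  obtain ⟨N, hN, hNsub⟩ :=
    Filter.mem_comap.mp (by rwa [uniformity_eq_comap_nhds_zero E] at hW)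
  obtain ⟨C, ⟨hC0, hCopen, hCbal, hCconv⟩, hCN⟩ :=
    (nhds_hasBasis_absConvex_open ℝ E).mem_iff.mp hN
  set s : Seminorm ℝ E :=
    gaugeSeminorm hCbal hCconv (absorbent_nhds_zero (hCopen.mem_nhds hC0)) with hs_def
  have hball : s.ball 0 1 = C := by
    rw [Seminorm.ball_zero_eq]
    simp_rw [hs_def, gaugeSeminorm_toFun]
    exact gauge_lt_one_eq_self_of_isOpen hCconv hC0 hCopen
  have hs_cont : Continuous s :=
    Seminorm.continuous (r := 1) (by rw [hball]; exact hCopen.mem_nhds hC0)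
  have hkey : ∀ x ∈ U, ∀ y ∈ U, s (y - x) < 1 → q (f y - f x) < 1 := by
    intro x hx y hy h
    have hmem : (y - x) ∈ C := by rw [← hball]; simpa [Seminorm.mem_ball_zero] using h
    have h2 : ((x, y) : E × E) ∈ (fun z : E × E => z.2 - z.1) ⁻¹' N :=
      Set.mem_preimage.mpr (hCN hmem)
    exact hNsub h2 ⟨hx, hy⟩
  refine ⟨s + r, ?_, ?_⟩
  · have : ⇑(s + r) = fun x => s x + r x := rfl
    rw [this]; exact hs_cont.add hr
  intro x₁ hx₁ x₂ hx₂ hr1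
  set d := x₁ - x₂ with hd
  set n : ℕ := ⌊s d⌋₊ + 1 with hn_def
  have hn_pos : 0 < (n : ℝ) := by positivity
  have hsd_lt : s d < n := by
    have := Nat.lt_floor_add_one (s d)
    push_cast [hn_def]; linarith
  set g : ℕ → E := fun k => x₁ + ((k : ℝ) / n) • (x₂ - x₁) with hg_def
  have hg0 : g 0 = x₁ := by simp [hg_def]
  have hgn : g n = x₂ := by
    simp only [hg_def, div_self hn_pos.ne', one_smul]
    abel
  have hgU : ∀ k ≤ n, g k ∈ U := by
    intro k hk
    have h1 : (0 : ℝ) ≤ (k : ℝ) / n := by positivity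
    have h2 : (k : ℝ) / n ≤ 1 := by
      rw [div_le_one hn_pos]; exact_mod_cast hk
    have := hUconv hx₁ hx₂ (by linarith : (0:ℝ) ≤ 1 - (k:ℝ)/n) h1 (by ring)
    convert this using 1
    simp only [hg_def]
    module
  have hdiff : ∀ k : ℕ, g k - g (k + 1) = ((1 : ℝ) / n) • d := by
    intro k
    have hcast : ((k + 1 : ℕ) : ℝ) / (n : ℝ) = (k : ℝ) / n + 1 / n := by
      push_cast; ring
    simp only [hg_def, hd, hcast]
    module
  have hsmall : ∀ k : ℕ, s (g k - g (k + 1)) < 1 := by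
    intro k
    rw [hdiff, map_smul_eq_mul]
    rw [Real.norm_eq_abs, abs_of_pos (by positivity : (0:ℝ) < 1 / n)]
    rw [div_mul_eq_mul_div, one_mul, div_lt_one hn_pos]
    exact hsd_lt
  have hstep : ∀ k < n, q (f (g k) - f (g (k + 1))) ≤ 1 := by
    intro k hk
    exact le_of_lt (hkey (g (k + 1)) (hgU _ hk) (g k) (hgU _ hk.le) (hsmall k))
  have htel : f x₁ - f x₂ = ∑ k ∈ Finset.range n, (f (g k) - f (g (k + 1))) := by
    rw [Finset.sum_range_sub' (fun k => f (g k)) n, hg0, hgn]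
  calc q (f x₁ - f x₂) ≤ ∑ k ∈ Finset.range n, q (f (g k) - f (g (k + 1))) := by
        rw [htel]; exact seminorm_sum_le_aux q n _
    _ ≤ ∑ _k ∈ Finset.range n, (1 : ℝ) :=
        Finset.sum_le_sum (fun k hk => hstep k (Finset.mem_range.mp hk))
    _ = n := by simp
    _ ≤ s d + r d := by
        have h1 : (⌊s d⌋₊ : ℝ) ≤ s d := Nat.floor_le (apply_nonneg s d)
        push_cast [hn_def]
        linarith
    _ = (s + r) (x₁ - x₂) := rfl
end

section
/- Let E, F be locally convex spaces, U ⊆ E open, f : U → F continuous, and suppose there exists a continuous map f^[1] : U^[1] → F, where U^[1] = {(x,y,t) ∈ U × E × ℝ | x + ty ∈ U}, such that f^[1](x,y,t) = (f(x+ty) - f(x))/t whenever t ≠ 0. Then f is C¹ in the Michal–Bastiani sense and df(x)(y) = f^[1](x,y,0). -/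
open Filter

/-- The BGN characterization of `C¹`: if `f` is continuous on the open set `U` and
there is a continuous map `f¹` on `U⁽¹⁾ = {(x,y,t) | x ∈ U, x + t•y ∈ U}` with
`f¹(x,y,t) = (f(x+ty) - f(x))/t` for `t ≠ 0`, then `f` is Michal–Bastiani `C¹` with
`df(x)(y) = f¹(x,y,0)`: all directional derivatives exist and equal `f¹(x,y,0)`, and
the differential is jointly continuous. -/
theorem bgn_c1_characterization
    {E F : Type*}
    [AddCommGroup E] [Module ℝ E] [TopologicalSpace E] [IsTopologicalAddGroup E]
    [ContinuousSMul ℝ E] [LocallyConvexSpace ℝ E]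
    [AddCommGroup F] [Module ℝ F] [TopologicalSpace F] [IsTopologicalAddGroup F]
    [ContinuousSMul ℝ F] [LocallyConvexSpace ℝ F]
    (U : Set E) (hU : IsOpen U) (f : E → F)
    (hf : ContinuousOn f U)
    (f1 : E × E × ℝ → F)
    (hf1cont : ContinuousOn f1 {p : E × E × ℝ | p.1 ∈ U ∧ p.1 + p.2.2 • p.2.1 ∈ U})
    (hf1eq : ∀ x ∈ U, ∀ y : E, ∀ t : ℝ, t ≠ 0 → x + t • y ∈ U →
      f1 (x, y, t) = t⁻¹ • (f (x + t • y) - f x)) :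
    (∀ x ∈ U, ∀ y : E,
      Tendsto (fun t : ℝ => t⁻¹ • (f (x + t • y) - f x)) (nhdsWithin 0 {0}ᶜ)
        (nhds (f1 (x, y, 0)))) ∧
    ContinuousOn (fun p : E × E => f1 (p.1, p.2, 0)) (U ×ˢ Set.univ) := by
  constructor
  · intro x hx y
    set K : Set (E × E × ℝ) := {p : E × E × ℝ | p.1 ∈ U ∧ p.1 + p.2.2 • p.2.1 ∈ U}
    -- the map t ↦ (x, y, t)
    have hgc : Continuous (fun t : ℝ => ((x, y, t) : E × E × ℝ)) := by continuity
    -- S = set of t with x + t•y ∈ U is an open neighborhood of 0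
    have hSopen : IsOpen {t : ℝ | x + t • y ∈ U} := by
      have : Continuous (fun t : ℝ => x + t • y) := by continuity
      exact hU.preimage this
    have hS0 : (0 : ℝ) ∈ {t : ℝ | x + t • y ∈ U} := by simp [hx]
    have hSnhds : {t : ℝ | x + t • y ∈ U} ∈ nhds (0 : ℝ) :=
      hSopen.mem_nhds hS0
    -- f1 is continuous within K at (x, y, 0)
    have hmem : ((x, y, 0) : E × E × ℝ) ∈ K := by
      constructor <;> simp [hx]
    have h1 : Tendsto (fun t : ℝ => f1 (x, y, t)) (nhdsWithin 0 {t : ℝ | x + t • y ∈ U})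
        (nhds (f1 (x, y, 0))) := by
      have := (hf1cont _ hmem).tendsto
      refine this.comp ?_
      refine tendsto_nhdsWithin_of_tendsto_nhds_of_eventually_within _ ?_ ?_
      · exact hgc.continuousAt.mono_left nhdsWithin_le_nhds
      · filter_upwards [self_mem_nhdsWithin] with t ht
        exact ⟨hx, ht⟩
    have h2 : Tendsto (fun t : ℝ => f1 (x, y, t)) (nhdsWithin 0 {0}ᶜ)
        (nhds (f1 (x, y, 0))) := by
      rw [nhdsWithin_eq_nhds.2 hSnhds] at h1
      exact h1.mono_left nhdsWithin_le_nhds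
    refine h2.congr' ?_
    filter_upwards [self_mem_nhdsWithin, mem_nhdsWithin_of_mem_nhds hSnhds] with t ht htS
    exact hf1eq x hx y t ht htS
  · have hc : Continuous (fun p : E × E => ((p.1, p.2, 0) : E × E × ℝ)) := by continuity
    refine ContinuousOn.comp hf1cont hc.continuousOn ?_
    rintro ⟨a, b⟩ ⟨ha, -⟩
    constructor <;> simp [ha]
end

section
/- Let E, F be locally convex spaces, U ⊆ E open, and f : U → F uniformly continuous. Let U₁ be a symmetric open neighborhood of 0 in E with U₁ + U₁ ⊆ U. If B ⊆ U₁ is a totally bounded subset of E, then f(B) is bounded in F. -/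
open scoped Pointwise

/-- A uniformly continuous map on an open set `U` of a locally convex space maps
totally bounded subsets of a symmetric open `0`-neighborhood `U₁` with
`U₁ + U₁ ⊆ U` to bounded sets. -/
theorem uniformContinuous_image_totallyBounded_isVonNBounded
    {E F : Type*}
    [AddCommGroup E] [Module ℝ E] [UniformSpace E] [IsUniformAddGroup E]
    [ContinuousSMul ℝ E] [LocallyConvexSpace ℝ E]
    [AddCommGroup F] [Module ℝ F] [UniformSpace F] [IsUniformAddGroup F]
    [ContinuousSMul ℝ F] [LocallyConvexSpace ℝ F]
    (U : Set E) (hUopen : IsOpen U) (f : E → F) (hf : UniformContinuousOn f U)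
    (U₁ : Set E) (hU₁open : IsOpen U₁) (hU₁0 : (0 : E) ∈ U₁)
    (hU₁symm : -U₁ = U₁) (hU₁add : U₁ + U₁ ⊆ U)
    (B : Set E) (hBU₁ : B ⊆ U₁) (hB : TotallyBounded B) :
    Bornology.IsVonNBounded ℝ (f '' B) := by
  have hU₁U : U₁ ⊆ U := fun x hx => hU₁add ⟨x, hx, 0, hU₁0, by simp⟩
  have hBU : B ⊆ U := fun x hx => hU₁U (hBU₁ hx)
  have htb : TotallyBounded (f '' B) := by
    intro V hV
    have h := hf hV
    rw [Filter.mem_map, Filter.mem_inf_iff] at h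
    obtain ⟨W, hW, P, hP, hWP⟩ := h
    obtain ⟨t, htB, htfin, hcov⟩ := (totallyBounded_iff_subset.mp hB) W hW
    refine ⟨f '' t, htfin.image f, ?_⟩
    rintro _ ⟨x, hxB, rfl⟩
    obtain ⟨y, hy, hxy⟩ := Set.mem_iUnion₂.mp (hcov hxB)
    refine Set.mem_iUnion₂.mpr ⟨f y, ⟨y, hy, rfl⟩, ?_⟩
    have : ((x, y) : E × E) ∈ (fun p : E × E => (f p.1, f p.2)) ⁻¹' V := by
      rw [hWP]
      exact ⟨hxy, Filter.mem_principal.mp hP (Set.mk_mem_prod (hBU hxB) (hBU (htB hy)))⟩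
    exact this
  exact htb.isVonNBounded ℝ
end
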